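/- Assume n≥2, n>2α, 0<α≤2, c₁,c₂≥0 with c₁+c₂>0, 0<p₁≤1 and 0<p₂≤(n+α)/(n−α), and let u be a positive continuous solution of the Hartree integral equation. Then there exists a constant C>0 (depending on u and the parameters) such that u(y) ≥ C·|y|^{−(n−α)} for all y ∈ ℝⁿ with |y| ≥ 1. -/

import Mathlib

open MeasureTheory Filter Metric Set
open scoped ENNReal NNReal Topology BigOperators Classical

noncomputable section

/-- `n`-dimensional Euclidean space. -/
abbrev Euc (n : ℕ) : Type := EuclideanSpace ℝ (Fin n)

/-- The Laplacian `Δu(x) = ∑ᵢ ∂²u/∂xᵢ²(x)`. -/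
noncomputable def lapl (n : ℕ) (u : Euc n → ℝ) (x : Euc n) : ℝ :=
  ∑ i : Fin n,
    fderiv ℝ (fun y => fderiv ℝ u y (EuclideanSpace.single i (1:ℝ))) x
      (EuclideanSpace.single i (1:ℝ))

/-- The normalization constant `C_{n,α} = (∫ (1 - cos(2πζ₁))/|ζ|^{n+α} dζ)⁻¹`. -/
noncomputable def fracC (n : ℕ) (α : ℝ) : ℝ :=
  (∫ ζ : Euc n,
    (1 - Real.cos (2 * Real.pi * (if h : 0 < n then ζ ⟨0, h⟩ else 0))) /
      ‖ζ‖ ^ ((n : ℝ) + α))⁻¹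

/-- The pointwise fractional Laplacian `(-Δ)^{α/2}` for `0 < α < 2`, defined as a principal
value, and `-Δ` when `α = 2`. -/
noncomputable def fracLap (n : ℕ) (α : ℝ) (u : Euc n → ℝ) (x : Euc n) : ℝ :=
  if α = 2 then - lapl n u x
  else fracC n α *
    limUnder (𝓝[>] (0:ℝ))
      (fun ε : ℝ => ∫ y in {y : Euc n | ε ≤ ‖y - x‖}, (u x - u y) / ‖x - y‖ ^ ((n : ℝ) + α))

/-- Membership in `L_α(ℝⁿ)`: `∫ |u(y)|/(1+|y|^{n+α}) dy < ∞`. -/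
def memLalpha (n : ℕ) (α : ℝ) (u : Euc n → ℝ) : Prop :=
  Integrable (fun y : Euc n => |u y| / (1 + ‖y‖ ^ ((n : ℝ) + α)))

/-- `u` is locally `C^{1,1}` at each point of `Ω`. -/
def C11On (n : ℕ) (u : Euc n → ℝ) (Ω : Set (Euc n)) : Prop :=
  ∀ x ∈ Ω, ∃ ε > 0, DifferentiableOn ℝ u (ball x ε) ∧
    ∃ K : ℝ≥0, LipschitzOnWith K (fderiv ℝ u) (ball x ε)

/-- Regularity required for the pointwise operator on `Ω`:
`C^{1,1}_{loc}(Ω) ∩ L_α(ℝⁿ)` if `0 < α < 2`, and `C²` on `Ω` if `α = 2`. -/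
def regOn (n : ℕ) (α : ℝ) (u : Euc n → ℝ) (Ω : Set (Euc n)) : Prop :=
  (α = 2 → ContDiffOn ℝ 2 u Ω) ∧ (α ≠ 2 → C11On n u Ω ∧ memLalpha n α u)

/-- Right-hand side of the static Schrödinger–Hartree equation with combined nonlinearities. -/
noncomputable def hartreeRHS (n : ℕ) (α c₁ c₂ p₁ p₂ : ℝ) (u : Euc n → ℝ) (x : Euc n) : ℝ :=
  c₁ * (∫ z : Euc n, u z ^ 2 / ‖x - z‖ ^ (2 * α)) * u x ^ p₁ + c₂ * u x ^ p₂

/-- `u` is a classical solution of the static Schrödinger–Hartree equation with combined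
nonlinearities. -/
def isHartreeSol (n : ℕ) (α c₁ c₂ p₁ p₂ : ℝ) (u : Euc n → ℝ) : Prop :=
  regOn n α u Set.univ ∧ ∀ x : Euc n, fracLap n α u x = hartreeRHS n α c₁ c₂ p₁ p₂ u x

/-- Right-hand side of the static Schrödinger–Maxwell equation with combined nonlinearities. -/
noncomputable def maxwellRHS (n : ℕ) (α c₁ c₂ q₁ q₂ : ℝ) (u : Euc n → ℝ) (x : Euc n) : ℝ :=
  c₁ * (∫ z : Euc n, u z ^ (((n:ℝ) + α) / ((n:ℝ) - α)) / ‖x - z‖ ^ ((n:ℝ) - α)) * u x ^ q₁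
    + c₂ * u x ^ q₂

/-- `u` is a classical solution of the static Schrödinger–Maxwell equation with combined
nonlinearities. -/
def isMaxwellSol (n : ℕ) (α c₁ c₂ q₁ q₂ : ℝ) (u : Euc n → ℝ) : Prop :=
  regOn n α u Set.univ ∧ ∀ x : Euc n, fracLap n α u x = maxwellRHS n α c₁ c₂ q₁ q₂ u x

/-- The Riesz potential constant `R_{α,n} = Γ((n-α)/2)/(π^{n/2} 2^α Γ(α/2))`. -/
noncomputable def Rconst (n : ℕ) (α : ℝ) : ℝ :=
  Real.Gamma (((n:ℝ) - α) / 2) / (Real.pi ^ ((n:ℝ) / 2) * (2:ℝ) ^ α * Real.Gamma (α / 2))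

/-- The Hartree integral equation. -/
def hartreeIE (n : ℕ) (α c₁ c₂ p₁ p₂ : ℝ) (u : Euc n → ℝ) : Prop :=
  ∀ y : Euc n, u y =
    (∫ z : Euc n, c₁ * Rconst n α / ‖y - z‖ ^ ((n:ℝ) - α)
      * (∫ ξ : Euc n, u ξ ^ 2 / ‖z - ξ‖ ^ (2 * α)) * u z ^ p₁)
    + ∫ z : Euc n, c₂ * Rconst n α / ‖y - z‖ ^ ((n:ℝ) - α) * u z ^ p₂

/-- The Maxwell integral equation. -/
def maxwellIE (n : ℕ) (α c₁ c₂ q₁ q₂ : ℝ) (u : Euc n → ℝ) : Prop :=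
  ∀ y : Euc n, u y =
    (∫ z : Euc n, c₁ * Rconst n α / ‖y - z‖ ^ ((n:ℝ) - α)
      * (∫ ξ : Euc n, u ξ ^ (((n:ℝ) + α) / ((n:ℝ) - α)) / ‖z - ξ‖ ^ ((n:ℝ) - α)) * u z ^ q₁)
    + ∫ z : Euc n, c₂ * Rconst n α / ‖y - z‖ ^ ((n:ℝ) - α) * u z ^ q₂

/-- The Kelvin-type transform `u_{x,λ}(y) = (λ/|y-x|)^{n-α} u(x + λ²(y-x)/|y-x|²)`. -/
noncomputable def kelvin (n : ℕ) (α : ℝ) (u : Euc n → ℝ) (x : Euc n) (lam : ℝ)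
    (y : Euc n) : ℝ :=
  (lam / ‖y - x‖) ^ ((n:ℝ) - α) * u (x + (lam ^ 2 / ‖y - x‖ ^ 2) • (y - x))

/-- `ω_{x,λ} = u_{x,λ} - u`. -/
noncomputable def omegaK (n : ℕ) (α : ℝ) (u : Euc n → ℝ) (x : Euc n) (lam : ℝ)
    (y : Euc n) : ℝ :=
  kelvin n α u x lam y - u y

/-- `B_λ⁻ = {y ∈ B_λ(x)\{x} : ω_{x,λ}(y) < 0}`. -/
def Bminus (n : ℕ) (α : ℝ) (u : Euc n → ℝ) (x : Euc n) (lam : ℝ) : Set (Euc n) :=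
  {y ∈ ball x lam \ {x} | omegaK n α u x lam y < 0}

/-- The moving-spheres radius
`λ̄(x) = sup {λ > 0 : u_{x,μ} ≥ u in B_μ(x)\{x} for all 0 < μ ≤ λ} ∈ (0, +∞]`. -/
noncomputable def lambdaBar (n : ℕ) (α : ℝ) (u : Euc n → ℝ) (x : Euc n) : ℝ≥0∞ :=
  ⨆ lam ∈ {l : ℝ | 0 < l ∧ ∀ μ : ℝ, 0 < μ → μ ≤ l →
      ∀ y ∈ ball x μ \ {x}, u y ≤ kelvin n α u x μ y}, ENNReal.ofReal lam

/-- The standard bubble profile `x ↦ C (μ/(1+μ²|x-x₀|²))^{(n-α)/2}`. -/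
noncomputable def stdBubble (n : ℕ) (α C μ : ℝ) (x₀ x : Euc n) : ℝ :=
  C * (μ / (1 + μ ^ 2 * ‖x - x₀‖ ^ 2)) ^ (((n:ℝ) - α) / 2)

/-- `P(y) = ∫ u(z)²/|y-z|^{2α} dz`. -/
noncomputable def Pfun (n : ℕ) (α : ℝ) (u : Euc n → ℝ) (y : Euc n) : ℝ :=
  ∫ z : Euc n, u z ^ 2 / ‖y - z‖ ^ (2 * α)

/-- `𝓛(y) = c₁p₁P(y)u(y)^{p₁-1} + c₂p₂u(y)^{p₂-1}`. -/
noncomputable def Lfun (n : ℕ) (α c₁ c₂ p₁ p₂ : ℝ) (u : Euc n → ℝ) (y : Euc n) : ℝ :=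
  c₁ * p₁ * Pfun n α u y * u y ^ (p₁ - 1) + c₂ * p₂ * u y ^ (p₂ - 1)

/-- `Q(y) = ∫ u(z)^{(n+α)/(n-α)}/|y-z|^{n-α} dz`. -/
noncomputable def Qfun (n : ℕ) (α : ℝ) (u : Euc n → ℝ) (y : Euc n) : ℝ :=
  ∫ z : Euc n, u z ^ (((n:ℝ) + α) / ((n:ℝ) - α)) / ‖y - z‖ ^ ((n:ℝ) - α)

/-- `𝓛̃(y) = c₁q₁Q(y)u(y)^{q₁-1} + c₂q₂u(y)^{q₂-1}`. -/
noncomputable def Ltilfun (n : ℕ) (α c₁ c₂ q₁ q₂ : ℝ) (u : Euc n → ℝ) (y : Euc n) : ℝ :=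
  c₁ * q₁ * Qfun n α u y * u y ^ (q₁ - 1) + c₂ * q₂ * u y ^ (q₂ - 1)

/-- `(u,v)` is a pair of nonnegative classical solutions of the Schrödinger–Maxwell system. -/
def isMaxwellSystemSol (n : ℕ) (α c₁ c₂ q₁ q₂ : ℝ) (u v : Euc n → ℝ) : Prop :=
  regOn n α u Set.univ ∧ regOn n α v Set.univ ∧
  (∀ x, 0 ≤ u x) ∧ (∀ x, 0 ≤ v x) ∧
  (∀ x : Euc n, fracLap n α u x = v x * u x ^ q₁ + c₂ * u x ^ q₂) ∧
  (∀ x : Euc n, fracLap n α v x = c₁ * (Rconst n α)⁻¹ * u x ^ (((n:ℝ) + α) / ((n:ℝ) - α)))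

/-- Hypotheses of the narrow region principle, Hartree case: `Ω` lies in the annulus
`A_{λ,l}(x)`, `ω_{x,λ}` has the required regularity on `Ω`, the differential inequality (a)
holds on `Ω ∩ B_λ⁻`, and conditions (b), (c) on the negative minimum hold. -/
def narrowHypH (n : ℕ) (α c₁ c₂ p₁ p₂ : ℝ) (u : Euc n → ℝ) (x : Euc n) (lam l : ℝ)
    (Ω : Set (Euc n)) : Prop :=
  0 < l ∧ l < lam ∧ Ω ⊆ {y : Euc n | lam - l < ‖y - x‖ ∧ ‖y - x‖ < lam} ∧
  regOn n α (omegaK n α u x lam) Ω ∧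
  (∀ y ∈ Ω ∩ Bminus n α u x lam,
    0 ≤ fracLap n α (omegaK n α u x lam) y
      - Lfun n α c₁ c₂ p₁ p₂ u y * omegaK n α u x lam y
      - 2 * c₁ * (∫ z in Bminus n α u x lam,
          u z * omegaK n α u x lam z / ‖y - z‖ ^ (2 * α)) * u y ^ p₁) ∧
  ((Bminus n α u x lam).Nonempty → ∃ y₀ ∈ ball x lam \ {x},
      omegaK n α u x lam y₀ < 0 ∧
      ∀ y ∈ ball x lam \ {x}, omegaK n α u x lam y₀ ≤ omegaK n α u x lam y) ∧
  (∀ y₀ ∈ (ball x lam \ {x}) \ Ω,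
      ¬ (omegaK n α u x lam y₀ < 0 ∧
        ∀ y ∈ ball x lam \ {x}, omegaK n α u x lam y₀ ≤ omegaK n α u x lam y))

/-- Hypotheses of the narrow region principle, Maxwell case. -/
def narrowHypM (n : ℕ) (α c₁ c₂ q₁ q₂ : ℝ) (u : Euc n → ℝ) (x : Euc n) (lam l : ℝ)
    (Ω : Set (Euc n)) : Prop :=
  0 < l ∧ l < lam ∧ Ω ⊆ {y : Euc n | lam - l < ‖y - x‖ ∧ ‖y - x‖ < lam} ∧
  regOn n α (omegaK n α u x lam) Ω ∧
  (∀ y ∈ Ω ∩ Bminus n α u x lam,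
    0 ≤ fracLap n α (omegaK n α u x lam) y
      - Ltilfun n α c₁ c₂ q₁ q₂ u y * omegaK n α u x lam y
      - c₁ * (((n:ℝ) + α) / ((n:ℝ) - α))
        * (∫ z in Bminus n α u x lam,
            u z ^ (2 * α / ((n:ℝ) - α)) * omegaK n α u x lam z / ‖y - z‖ ^ ((n:ℝ) - α))
        * u y ^ q₁) ∧
  ((Bminus n α u x lam).Nonempty → ∃ y₀ ∈ ball x lam \ {x},
      omegaK n α u x lam y₀ < 0 ∧
      ∀ y ∈ ball x lam \ {x}, omegaK n α u x lam y₀ ≤ omegaK n α u x lam y) ∧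
  (∀ y₀ ∈ (ball x lam \ {x}) \ Ω,
      ¬ (omegaK n α u x lam y₀ < 0 ∧
        ∀ y ∈ ball x lam \ {x}, omegaK n α u x lam y₀ ≤ omegaK n α u x lam y))

lemma ae_ne_pt (n : ℕ) (hn : 2 ≤ n) (y : Euc n) : ∀ᵐ z : Euc n, z ≠ y := by
  haveI : Nonempty (Fin n) := Fin.pos_iff_nonempty.mp (by omega)
  refine ae_iff.mpr ?_
  simp only [ne_eq, not_not, Set.setOf_eq_eq_singleton]
  exact measure_singleton y

lemma key_lower (n : ℕ) (hn : 2 ≤ n) (α a R : ℝ) (hαn : α < (n:ℝ))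
    (ha : 0 < a) (hR : 0 < R)
    (g F : Euc n → ℝ) (hg0 : ∀ z, 0 ≤ g z)
    (hgint : IntegrableOn g (ball (0:Euc n) R))
    (y : Euc n) (hy : 1 ≤ ‖y‖)
    (hFint : Integrable F)
    (hFeq : ∀ z, F z = a / ‖y - z‖ ^ ((n:ℝ) - α) * g z) :
    a / (1+R) ^ ((n:ℝ) - α) * (∫ z in ball (0:Euc n) R, g z) * ‖y‖ ^ (-((n:ℝ)-α))
      ≤ ∫ z, F z := by
  have he : (0:ℝ) ≤ (n:ℝ) - α := by linarith
  have hy0 : (0:ℝ) < ‖y‖ := lt_of_lt_of_le one_pos hy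
  have hFnn : ∀ z, 0 ≤ F z := fun z => by
    rw [hFeq z]
    exact mul_nonneg (div_nonneg ha.le (Real.rpow_nonneg (norm_nonneg _) _)) (hg0 z)
  set ε := a / ((1+R)*‖y‖) ^ ((n:ℝ)-α) with hε
  have h1 : ∫ z in ball (0:Euc n) R, ε * g z ≤ ∫ z in ball (0:Euc n) R, F z := by
    refine integral_mono_ae (hgint.const_mul ε) hFint.integrableOn ?_
    filter_upwards [ae_restrict_mem measurableSet_ball,
      ae_restrict_of_ae (ae_ne_pt n hn y)] with z hz hzy
    rw [hFeq z]
    apply mul_le_mul_of_nonneg_right _ (hg0 z)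
    have h0 : 0 < ‖y - z‖ := norm_sub_pos_iff.mpr (Ne.symm hzy)
    have hzR : ‖z‖ < R := mem_ball_zero_iff.mp hz
    have hle : ‖y - z‖ ≤ (1+R) * ‖y‖ := by
      have h1 := norm_sub_le y z
      nlinarith [norm_nonneg y, norm_nonneg z]
    rw [hε]
    apply div_le_div_of_nonneg_left ha.le (Real.rpow_pos_of_pos h0 _)
    exact Real.rpow_le_rpow (norm_nonneg _) hle he
  have h2 : ∫ z in ball (0:Euc n) R, ε * g z = ε * ∫ z in ball (0:Euc n) R, g z :=
    integral_const_mul ε _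
  have h3 : ∫ z in ball (0:Euc n) R, F z ≤ ∫ z, F z :=
    setIntegral_le_integral hFint (Filter.Eventually.of_forall hFnn)
  have harith : a / (1+R) ^ ((n:ℝ)-α) * (∫ z in ball (0:Euc n) R, g z) * ‖y‖ ^ (-((n:ℝ)-α))
      = ε * ∫ z in ball (0:Euc n) R, g z := by
    rw [Real.rpow_neg (norm_nonneg y), hε, Real.mul_rpow (by positivity) (norm_nonneg y)]
    have h4 : ((1:ℝ)+R) ^ ((n:ℝ)-α) ≠ 0 := (Real.rpow_pos_of_pos (by positivity) _).ne'
    have h5 : ‖y‖ ^ ((n:ℝ)-α) ≠ 0 := (Real.rpow_pos_of_pos hy0 _).ne'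
    field_simp
  rw [harith, ← h2]
  exact le_trans h1 h3

private noncomputable def F1 (n : ℕ) (α c₁ p₁ : ℝ) (u : Euc n → ℝ) (y z : Euc n) : ℝ :=
  c₁ * Rconst n α / ‖y - z‖ ^ ((n:ℝ) - α)
    * (∫ ξ : Euc n, u ξ ^ 2 / ‖z - ξ‖ ^ (2 * α)) * u z ^ p₁

private noncomputable def F2 (n : ℕ) (α c₂ p₂ : ℝ) (u : Euc n → ℝ) (y z : Euc n) : ℝ :=
  c₂ * Rconst n α / ‖y - z‖ ^ ((n:ℝ) - α) * u z ^ p₂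


/-- lower bound `u(y) ≥ C|y|^{-(n-α)}` for `|y| ≥ 1`, for positive
continuous solutions of the Hartree integral equation. -/
theorem hartree_lower_bound (n : ℕ) (α c₁ c₂ p₁ p₂ : ℝ) (u : Euc n → ℝ)
    (hn : 2 ≤ n) (hnα : 2 * α < (n:ℝ)) (hα0 : 0 < α) (hα2 : α ≤ 2)
    (hc₁ : 0 ≤ c₁) (hc₂ : 0 ≤ c₂) (hc : 0 < c₁ + c₂)
    (hp₁0 : 0 < p₁) (hp₁1 : p₁ ≤ 1)
    (hp₂0 : 0 < p₂) (hp₂ : p₂ ≤ ((n:ℝ) + α) / ((n:ℝ) - α))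
    (hupos : ∀ x, 0 < u x) (hcont : Continuous u)
    (hIE : hartreeIE n α c₁ c₂ p₁ p₂ u) :
    ∃ C > (0:ℝ), ∀ y : Euc n, 1 ≤ ‖y‖ → C * ‖y‖ ^ (-((n:ℝ) - α)) ≤ u y := by
  haveI : Nonempty (Fin n) := Fin.pos_iff_nonempty.mp (by omega)
  have hαn : α < (n:ℝ) := by linarith
  have hKpos : 0 < Rconst n α := by
    unfold Rconst
    have h1 : 0 < Real.Gamma (((n:ℝ)-α)/2) := Real.Gamma_pos_of_pos (by linarith)
    have h2 : 0 < Real.Gamma (α/2) := Real.Gamma_pos_of_pos (by linarith)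
    have h3 : (0:ℝ) < Real.pi := Real.pi_pos
    positivity
  have hIEy : ∀ y, u y = (∫ z, F1 n α c₁ p₁ u y z) + ∫ z, F2 n α c₂ p₂ u y z := hIE
  have hF₁nn : ∀ y z, 0 ≤ F1 n α c₁ p₁ u y z := by
    intro y z
    have hPnn : 0 ≤ ∫ ξ : Euc n, u ξ ^ 2 / ‖z - ξ‖ ^ (2 * α) :=
      integral_nonneg fun ξ => by positivity
    exact mul_nonneg (mul_nonneg (by positivity) hPnn) (Real.rpow_nonneg (hupos z).le _)
  have hF₂nn : ∀ y z, 0 ≤ F2 n α c₂ p₂ u y z := by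
    intro y z
    exact mul_nonneg (by positivity) (Real.rpow_nonneg (hupos z).le _)
  have hI₁nn : ∀ y, 0 ≤ ∫ z, F1 n α c₁ p₁ u y z := fun y => integral_nonneg (hF₁nn y)
  have hI₂nn : ∀ y, 0 ≤ ∫ z, F2 n α c₂ p₂ u y z := fun y => integral_nonneg (hF₂nn y)
  -- L2
  have hL2 : 0 < c₂ → ∃ C2 > (0:ℝ), ∀ y, 1 ≤ ‖y‖ → 0 < (∫ z, F2 n α c₂ p₂ u y z) →
      C2 * ‖y‖ ^ (-((n:ℝ)-α)) ≤ ∫ z, F2 n α c₂ p₂ u y z := by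
    intro hc2
    have hgcont : Continuous fun z : Euc n => u z ^ p₂ :=
      hcont.rpow_const fun z => Or.inl (hupos z).ne'
    have hgint : IntegrableOn (fun z : Euc n => u z ^ p₂) (ball (0:Euc n) 1) :=
      (hgcont.continuousOn.integrableOn_compact (isCompact_closedBall _ _)).mono_set
        ball_subset_closedBall
    have hm₂ : 0 < ∫ z in ball (0:Euc n) 1, u z ^ p₂ := by
      rw [setIntegral_pos_iff_support_of_nonneg_ae
        (Filter.Eventually.of_forall fun z => Real.rpow_nonneg (hupos z).le _) hgint]
      refine lt_of_lt_of_le (measure_ball_pos volume (0:Euc n) one_pos) (measure_mono ?_)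
      intro z hz
      exact ⟨(Real.rpow_pos_of_pos (hupos z) _).ne', hz⟩
    refine ⟨c₂ * Rconst n α / (1+1) ^ ((n:ℝ)-α) * ∫ z in ball (0:Euc n) 1, u z ^ p₂,
      by positivity, ?_⟩
    intro y hy hpos
    have hintF : Integrable (F2 n α c₂ p₂ u y) := by
      by_contra h
      rw [integral_undef h] at hpos
      exact lt_irrefl _ hpos
    exact key_lower n hn α (c₂ * Rconst n α) 1 hαn (by positivity) one_pos
      (fun z => u z ^ p₂) (F2 n α c₂ p₂ u y)
      (fun z => Real.rpow_nonneg (hupos z).le _) hgint y hy hintF (fun z => rfl)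
  -- L1
  have hL1 : (∃ y₀, (∫ z, F1 n α c₁ p₁ u y₀ z) ≠ 0) →
      ∃ C1 > (0:ℝ), ∀ y, 1 ≤ ‖y‖ → 0 < (∫ z, F1 n α c₁ p₁ u y z) →
        C1 * ‖y‖ ^ (-((n:ℝ)-α)) ≤ ∫ z, F1 n α c₁ p₁ u y z := by
    rintro ⟨y₀, hy₀⟩
    have hpos0 : 0 < ∫ z, F1 n α c₁ p₁ u y₀ z := (hI₁nn y₀).lt_of_ne (Ne.symm hy₀)
    have hint0 : Integrable (F1 n α c₁ p₁ u y₀) := by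
      by_contra h
      rw [integral_undef h] at hpos0
      exact lt_irrefl _ hpos0
    have hc1 : 0 < c₁ := by
      rcases hc₁.lt_or_eq with h | h
      · exact h
      · exfalso
        apply hy₀
        have hz : F1 n α c₁ p₁ u y₀ = fun _ => 0 := by
          funext z
          show c₁ * Rconst n α / ‖y₀ - z‖ ^ ((n:ℝ) - α) * _ * u z ^ p₁ = 0
          rw [← h]
          ring
        rw [hz, integral_zero]
    have hsupp : 0 < volume (Function.support (F1 n α c₁ p₁ u y₀)) :=
      (integral_pos_iff_support_of_nonneg_ae
        (Filter.Eventually.of_forall (hF₁nn y₀)) hint0).mp hpos0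
    have hex : ∃ k : ℕ, 0 < volume
        (Function.support (F1 n α c₁ p₁ u y₀) ∩ ball (0:Euc n) ((k:ℝ)+1)) := by
      by_contra h
      push_neg at h
      have hcov : Function.support (F1 n α c₁ p₁ u y₀) ⊆
          ⋃ k : ℕ, Function.support (F1 n α c₁ p₁ u y₀) ∩ ball (0:Euc n) ((k:ℝ)+1) := by
        intro z hz
        rcases exists_nat_gt ‖z‖ with ⟨k, hk⟩
        exact mem_iUnion.mpr ⟨k, hz, mem_ball_zero_iff.mpr (by linarith)⟩
      have h0 : volume (Function.support (F1 n α c₁ p₁ u y₀)) = 0 :=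
        measure_mono_null hcov
          (measure_iUnion_null fun k => le_antisymm (h k) zero_le)
      exact absurd h0 hsupp.ne'
    obtain ⟨k, hk⟩ := hex
    set R : ℝ := (k:ℝ) + 1 with hRdef
    have hR : (0:ℝ) < R := by positivity
    set g : Euc n → ℝ :=
      fun z => (∫ ξ : Euc n, u ξ ^ 2 / ‖z - ξ‖ ^ (2 * α)) * u z ^ p₁ with hgdef
    have hgnn : ∀ z, 0 ≤ g z := fun z =>
      mul_nonneg (integral_nonneg fun ξ => by positivity) (Real.rpow_nonneg (hupos z).le _)
    have hFeq : ∀ y z, F1 n α c₁ p₁ u y z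
        = c₁ * Rconst n α / ‖y - z‖ ^ ((n:ℝ) - α) * g z := fun y z => mul_assoc _ _ _
    have ha : 0 < c₁ * Rconst n α := mul_pos hc1 hKpos
    have he : (0:ℝ) ≤ (n:ℝ) - α := by linarith
    have hcontk : Continuous fun z : Euc n => ‖y₀ - z‖ ^ ((n:ℝ)-α) :=
      ((continuous_const.sub continuous_id).norm).rpow_const fun z => Or.inr he
    have hgm : AEStronglyMeasurable g volume := by
      have hcontk2 : Continuous fun z : Euc n => ‖y₀ - z‖ ^ ((n:ℝ)-α) / (c₁ * Rconst n α) :=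
        hcontk.div_const _
      refine AEStronglyMeasurable.congr
        (hint0.aestronglyMeasurable.mul hcontk2.aestronglyMeasurable) ?_
      filter_upwards [ae_ne_pt n hn y₀] with z hz
      have hkern : ‖y₀ - z‖ ^ ((n:ℝ)-α) ≠ 0 :=
        (Real.rpow_pos_of_pos (norm_sub_pos_iff.mpr (Ne.symm hz)) _).ne'
      show F1 n α c₁ p₁ u y₀ z * (‖y₀ - z‖ ^ ((n:ℝ)-α) / (c₁ * Rconst n α)) = g z
      rw [hFeq y₀ z]
      field_simp
    have hb : IntegrableOn g (ball (0:Euc n) R) := by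
      set B : ℝ := (‖y₀‖ + R) ^ ((n:ℝ)-α) / (c₁ * Rconst n α) with hBdef
      refine Integrable.mono'
        ((hint0.const_mul B).integrableOn) hgm.restrict ?_
      filter_upwards [ae_restrict_mem measurableSet_ball,
        ae_restrict_of_ae (ae_ne_pt n hn y₀)] with z hz hzy
      rw [Real.norm_of_nonneg (hgnn z)]
      have h0 : 0 < ‖y₀ - z‖ := norm_sub_pos_iff.mpr (Ne.symm hzy)
      have hzR : ‖z‖ < R := mem_ball_zero_iff.mp hz
      have hkle : ‖y₀ - z‖ ^ ((n:ℝ)-α) ≤ (‖y₀‖ + R) ^ ((n:ℝ)-α) := by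
        apply Real.rpow_le_rpow (norm_nonneg _) _ he
        have := norm_sub_le y₀ z
        linarith
      have hkpos : 0 < ‖y₀ - z‖ ^ ((n:ℝ)-α) := Real.rpow_pos_of_pos h0 _
      rw [hFeq y₀ z, show B * (c₁ * Rconst n α / ‖y₀ - z‖ ^ ((n:ℝ)-α) * g z)
        = (B * (c₁ * Rconst n α) / ‖y₀ - z‖ ^ ((n:ℝ)-α)) * g z by ring]
      nth_rewrite 1 [← one_mul (g z)]
      apply mul_le_mul_of_nonneg_right _ (hgnn z)
      rw [hBdef, div_mul_cancel₀ _ ha.ne', le_div_iff₀ hkpos, one_mul]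
      exact hkle
    have hm : 0 < ∫ z in ball (0:Euc n) R, g z := by
      rw [setIntegral_pos_iff_support_of_nonneg_ae
        (Filter.Eventually.of_forall hgnn) hb]
      refine lt_of_lt_of_le hk (measure_mono ?_)
      rintro z ⟨hz1, hz2⟩
      refine ⟨fun h => hz1 ?_, hz2⟩
      rw [hFeq y₀ z, h, mul_zero]
    refine ⟨c₁ * Rconst n α / (1+R) ^ ((n:ℝ)-α) * ∫ z in ball (0:Euc n) R, g z,
      by positivity, ?_⟩
    intro y hy hposy
    have hintF : Integrable (F1 n α c₁ p₁ u y) := by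
      by_contra h
      rw [integral_undef h] at hposy
      exact lt_irrefl _ hposy
    exact key_lower n hn α (c₁ * Rconst n α) R hαn ha hR g (F1 n α c₁ p₁ u y)
      hgnn hb y hy hintF (hFeq y)
  -- assemble
  have hrnn : ∀ y : Euc n, (0:ℝ) ≤ ‖y‖ ^ (-((n:ℝ)-α)) :=
    fun y => Real.rpow_nonneg (norm_nonneg y) _
  by_cases hQ : ∃ y₀, (∫ z, F1 n α c₁ p₁ u y₀ z) ≠ 0
  · obtain ⟨C1, hC1, hB1⟩ := hL1 hQ
    by_cases hc2 : 0 < c₂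
    · obtain ⟨C2, hC2, hB2⟩ := hL2 hc2
      refine ⟨min C1 C2, lt_min hC1 hC2, ?_⟩
      intro y hy
      rcases (hI₁nn y).eq_or_lt with h | h
      · have hu : u y = ∫ z, F2 n α c₂ p₂ u y z := by rw [hIEy y, ← h, zero_add]
        have hpos2 : 0 < ∫ z, F2 n α c₂ p₂ u y z := hu ▸ hupos y
        calc min C1 C2 * ‖y‖ ^ (-((n:ℝ)-α))
            ≤ C2 * ‖y‖ ^ (-((n:ℝ)-α)) :=
              mul_le_mul_of_nonneg_right (min_le_right _ _) (hrnn y)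
          _ ≤ ∫ z, F2 n α c₂ p₂ u y z := hB2 y hy hpos2
          _ = u y := hu.symm
      · have h1 := hB1 y hy h
        have h2 : (∫ z, F1 n α c₁ p₁ u y z) ≤ u y := by
          rw [hIEy y]; linarith [hI₂nn y]
        calc min C1 C2 * ‖y‖ ^ (-((n:ℝ)-α))
            ≤ C1 * ‖y‖ ^ (-((n:ℝ)-α)) :=
              mul_le_mul_of_nonneg_right (min_le_left _ _) (hrnn y)
          _ ≤ ∫ z, F1 n α c₁ p₁ u y z := h1
          _ ≤ u y := h2
    · have hc2' : c₂ = 0 := le_antisymm (not_lt.mp hc2) hc₂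
      refine ⟨C1, hC1, ?_⟩
      intro y hy
      have hF2z : (∫ z, F2 n α c₂ p₂ u y z) = 0 := by
        have hz : F2 n α c₂ p₂ u y = fun _ => 0 := by
          funext z
          show c₂ * Rconst n α / ‖y - z‖ ^ ((n:ℝ) - α) * u z ^ p₂ = 0
          rw [hc2']; ring
        rw [hz, integral_zero]
      have hu : u y = ∫ z, F1 n α c₁ p₁ u y z := by rw [hIEy y, hF2z, add_zero]
      have := hB1 y hy (hu ▸ hupos y)
      linarith [hu ▸ this]
  · push_neg at hQ
    have hc2 : 0 < c₂ := by
      rcases hc₂.lt_or_eq with h | h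
      · exact h
      · exfalso
        have hF2z : (∫ z, F2 n α c₂ p₂ u 0 z) = 0 := by
          have hz : F2 n α c₂ p₂ u 0 = fun _ => 0 := by
            funext z
            show c₂ * Rconst n α / ‖(0:Euc n) - z‖ ^ ((n:ℝ) - α) * u z ^ p₂ = 0
            rw [← h]; ring
          rw [hz, integral_zero]
        have := hIEy 0
        rw [hQ 0, hF2z, add_zero] at this
        exact absurd this (hupos 0).ne'
    obtain ⟨C2, hC2, hB2⟩ := hL2 hc2
    refine ⟨C2, hC2, fun y hy => ?_⟩
    have hu : u y = ∫ z, F2 n α c₂ p₂ u y z := by rw [hIEy y, hQ y, zero_add]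
    rw [hu]
    exact hB2 y hy (hu ▸ hupos y)
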